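/- Let Y be a set, (A, ω) a partially ordered set, and 𝔄 a closed submonoid of relations on Y with 𝔄 ≠ P(Y×Y) (not all relations). Suppose there exist φ, ψ : Y → A with (φ, ψ) ∈ 𝔄(ω) and ψ(y) <_ω φ(y) for all y ∈ Y. Then for every positive integer k, (A, ω) contains a strictly increasing chain a₁ < a₂ < ... < a_k. -/

import Mathlib

/-- Composition of binary relations: `relComp ρ σ` applies `ρ` first, then `σ`;
this is `σ ∘ ρ` in the paper's notation. -/
def relComp {A B C : Type*} (ρ : Set (A × B)) (σ : Set (B × C)) : Set (A × C) :=
  {p | ∃ b, (p.1, b) ∈ ρ ∧ (b, p.2) ∈ σ}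

/-- A closed submonoid of the monoid of binary relations on `Y`. -/
def ClosedSubmonoid {Y : Type*} (𝔄 : Set (Set (Y × Y))) : Prop :=
  (Set.diagonal Y ∈ 𝔄) ∧
  (∀ α β, α ∈ 𝔄 → β ∈ 𝔄 → relComp α β ∈ 𝔄) ∧
  (∀ α β, α ∈ 𝔄 → α ⊆ β → β ∈ 𝔄)

/-- The relation induced on `Y → A` by a family of relations `𝔄` on `Y`. -/
def indRel {Y A : Type*} [PartialOrder A] (𝔄 : Set (Set (Y × Y))) (φ₁ φ₂ : Y → A) : Prop :=
  {p : Y × Y | φ₁ p.1 ≤ φ₂ p.2} ∈ 𝔄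

theorem nonuniversal_chain {Y A : Type*} [PartialOrder A]
    (𝔄 : Set (Set (Y × Y))) (h𝔄 : ClosedSubmonoid 𝔄)
    (hnu : 𝔄 ≠ Set.univ)
    (φ ψ : Y → A) (h : indRel 𝔄 φ ψ) (hlt : ∀ y : Y, ψ y < φ y)
    (k : ℕ) (hk : 0 < k) :
    ∃ a : Fin k → A, StrictMono a := by
  obtain ⟨hdiag, hcomp, hup⟩ := h𝔄
  -- members of 𝔄 are nonempty
  have hne : ∀ s ∈ 𝔄, s.Nonempty := by
    intro s hs
    rcases s.eq_empty_or_nonempty with rfl | hn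
    · exact absurd (Set.eq_univ_of_forall fun β => hup ∅ β hs (Set.empty_subset β)) hnu
    · exact hn
  set ρ : Set (Y × Y) := {p : Y × Y | φ p.1 ≤ ψ p.2} with hρ
  have hρ𝔄 : ρ ∈ 𝔄 := h
  -- iterated composition
  let pow : ℕ → Set (Y × Y) := fun n => Nat.rec (Set.diagonal Y)
    (fun _ s => relComp ρ s) n
  have hpow𝔄 : ∀ n, pow n ∈ 𝔄 := by
    intro n
    induction n with
    | zero => exact hdiag
    | succ n ih => exact hcomp _ _ hρ𝔄 ih
  -- chains from membership in pow n
  have hchain : ∀ n x y, (x, y) ∈ pow n →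
      ∃ l : List Y, List.Chain (fun a b => (a, b) ∈ ρ) x l ∧ l.length = n := by
    intro n
    induction n with
    | zero => intro x y _; exact ⟨[], List.Chain.nil, rfl⟩
    | succ n ih =>
      intro x y hxy
      obtain ⟨b, hxb, hby⟩ := hxy
      obtain ⟨l, hl, hlen⟩ := ih b y hby
      exact ⟨b :: l, List.Chain.cons hxb hl, by simp [hlen]⟩
  obtain ⟨⟨x, y⟩, hxy⟩ := hne _ (hpow𝔄 (k - 1))
  obtain ⟨l, hl, hlen⟩ := hchain (k - 1) x y hxy
  -- the list of values
  set L : List A := (x :: l).map φ with hL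
  have hLlen : L.length = k := by
    simp [hL, hlen]; omega
  have hLchain : List.Chain' (· < ·) L := by
    rw [hL, List.Chain', List.isChain_map]
    have : List.Chain' (fun a b => (a, b) ∈ ρ) (x :: l) := hl
    exact List.IsChain.imp (fun a b hab => lt_of_le_of_lt hab (hlt b)) this
  have hpair : L.Pairwise (· < ·) := List.isChain_iff_pairwise.mp hLchain
  refine ⟨fun i => L.get (Fin.cast hLlen.symm i), ?_⟩
  intro i j hij
  exact List.pairwise_iff_get.mp hpair _ _ hij
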